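/- Let (X_n, X̂_n)_{n≥1} be a jointly distributed process on finite alphabets, let k ≥ 1, and for each n define vec P^k_{X̂^n|X^n}(x̂^n | x^n) = ∏_{i=1}^n P(x̂_i | x̂^{i−1}, x^{i−k}) using the conditional distributions induced by the joint law (terms with i ≤ k condition on x̂^{i−1} alone). Then for every N ≥ 1, the k-delay directed information satisfies Σ_{n=1}^N I(X̂^{n+k−1} ; X_n | X^{n−1}) = E [ log ( P_{X^N, X̂^N}(X^N, X̂^N) / ( vec P^k_{X̂^N|X^N}(X̂^N | X^N) · P_{X^N}(X^N) ) ) ], where the terms with n + k − 1 > N are interpreted with X̂^{n+k−1} replaced by X̂^N. -/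

import Mathlib

/-!
The `k`-delay directed information as an expectation (equations `eq:kdiri` and
`eq:kdirgen` agree in the mean):
`Σ_{n=1}^N I(X̂^{n+k-1} ; X_n | X^{n-1})
   = E [ log ( P_{X^N,X̂^N} / ( vec P^k_{X̂^N|X^N} · P_{X^N} ) ) ]`,
where terms with `n+k-1 > N` are interpreted with `X̂^{n+k-1}` replaced by `X̂^N`.
-/

open Finset

section

variable {𝒳 𝒳h : Type} [Fintype 𝒳] [Fintype 𝒳h] [DecidableEq 𝒳] [DecidableEq 𝒳h]

/-- A jointly distributed process on `𝒳 × 𝒳̂`: a consistent family of probability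
distributions on finite blocks of pairs. -/
def IsJointProcess (J : ∀ n : ℕ, (Fin n → 𝒳) → (Fin n → 𝒳h) → ℝ) : Prop :=
  (∀ n x xh, 0 ≤ J n x xh) ∧
    (∀ n, ∑ x : Fin n → 𝒳, ∑ xh : Fin n → 𝒳h, J n x xh = 1) ∧
    ∀ n (x : Fin n → 𝒳) (xh : Fin n → 𝒳h),
      J n x xh = ∑ a : 𝒳, ∑ b : 𝒳h, J (n + 1) (Fin.snoc x a) (Fin.snoc xh b)

/-- Marginal probability, under a joint law `J` on `𝒳^n × 𝒳̂^n`, of observing the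
values of `x` on the index set `S` and the values of `xh` on the index set `T`. -/
noncomputable def margin {n : ℕ} (J : (Fin n → 𝒳) → (Fin n → 𝒳h) → ℝ)
    (S T : Finset (Fin n)) (x : Fin n → 𝒳) (xh : Fin n → 𝒳h) : ℝ :=
  ∑ x' : Fin n → 𝒳, ∑ xh' : Fin n → 𝒳h,
    if (∀ i ∈ S, x' i = x i) ∧ (∀ i ∈ T, xh' i = xh i) then J x' xh' else 0

/-- `vec P^k_{X̂^n|X^n}(x̂^n|x^n) = ∏_{i=1}^n P(x̂_i | x̂^{i-1}, x^{i-k})`, the product of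
the `k`-delay conditional distributions induced by the joint law `J` (terms with
`i ≤ k` condition on `x̂^{i-1}` alone). -/
noncomputable def vecP {n : ℕ} (J : (Fin n → 𝒳) → (Fin n → 𝒳h) → ℝ) (k : ℕ)
    (x : Fin n → 𝒳) (xh : Fin n → 𝒳h) : ℝ :=
  ∏ t ∈ range n,
    margin J (univ.filter fun j => (j : ℕ) + k ≤ t) (univ.filter fun j => (j : ℕ) ≤ t) x xh /
      margin J (univ.filter fun j => (j : ℕ) + k ≤ t) (univ.filter fun j => (j : ℕ) < t) x xh

/-- Probability of an event under a weight function on a finite outcome space. -/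
noncomputable def prEvent {Ω : Type} [Fintype Ω] (w : Ω → ℝ) (s : Ω → Prop)
    [DecidablePred s] : ℝ :=
  ∑ ω, if s ω then w ω else 0

/-- Conditional mutual information `I(f ; g | h)` (in bits) of three finite-valued
random variables on a finite probability space with weights `w`. -/
noncomputable def cmi {Ω A B C : Type} [Fintype Ω]
    [DecidableEq A] [DecidableEq B] [DecidableEq C]
    (w : Ω → ℝ) (f : Ω → A) (g : Ω → B) (h : Ω → C) : ℝ :=
  ∑ ω, w ω * Real.logb 2
    ((prEvent w (fun ω' => f ω' = f ω ∧ g ω' = g ω ∧ h ω' = h ω) *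
        prEvent w (fun ω' => h ω' = h ω)) /
      (prEvent w (fun ω' => f ω' = f ω ∧ h ω' = h ω) *
        prEvent w (fun ω' => g ω' = g ω ∧ h ω' = h ω)))

/-! ### Auxiliary lemmas -/

lemma aux_prEvent_congr {Ω : Type} [Fintype Ω] (w : Ω → ℝ) {s s' : Ω → Prop}
    [DecidablePred s] [DecidablePred s'] (h : ∀ ω, s ω ↔ s' ω) :
    prEvent w s = prEvent w s' :=
  Finset.sum_congr rfl fun ω _ => if_congr (h ω) rfl rfl

lemma aux_prEvent_eq_margin {n : ℕ} (J : (Fin n → 𝒳) → (Fin n → 𝒳h) → ℝ)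
    (S T : Finset (Fin n)) (z : (Fin n → 𝒳) × (Fin n → 𝒳h)) :
    prEvent (fun z' : (Fin n → 𝒳) × (Fin n → 𝒳h) => J z'.1 z'.2)
      (fun z' => (∀ i ∈ S, z'.1 i = z.1 i) ∧ (∀ i ∈ T, z'.2 i = z.2 i)) =
    margin J S T z.1 z.2 := by
  rw [prEvent, margin, Fintype.sum_prod_type]

lemma aux_le_margin {n : ℕ} (J : (Fin n → 𝒳) → (Fin n → 𝒳h) → ℝ)
    (h0 : ∀ x xh, 0 ≤ J x xh) (S T : Finset (Fin n)) (x : Fin n → 𝒳) (xh : Fin n → 𝒳h) :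
    J x xh ≤ margin J S T x xh := by
  calc J x xh = (if (∀ i ∈ S, x i = x i) ∧ (∀ i ∈ T, xh i = xh i) then J x xh else 0) := by simp
    _ ≤ ∑ xh' : Fin n → 𝒳h, (if (∀ i ∈ S, x i = x i) ∧ (∀ i ∈ T, xh' i = xh i) then J x xh' else 0) := by
        apply Finset.single_le_sum
          (f := fun xh' => if (∀ i ∈ S, x i = x i) ∧ (∀ i ∈ T, xh' i = xh i) then J x xh' else 0)
          (fun i _ => by split; exacts [h0 _ _, le_rfl]) (mem_univ xh)
    _ ≤ margin J S T x xh := by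
        rw [margin]
        apply Finset.single_le_sum
          (f := fun x' => ∑ xh' : Fin n → 𝒳h, if (∀ i ∈ S, x' i = x i) ∧ (∀ i ∈ T, xh' i = xh i) then J x' xh' else 0)
          (fun x' _ => Finset.sum_nonneg fun xh' _ => by split; exacts [h0 _ _, le_rfl])
          (mem_univ x)

lemma aux_margin_univ_univ {n : ℕ} (J : (Fin n → 𝒳) → (Fin n → 𝒳h) → ℝ)
    (x : Fin n → 𝒳) (xh : Fin n → 𝒳h) :
    margin J univ univ x xh = J x xh := by
  rw [margin]
  have h : ∀ (x' : Fin n → 𝒳) (xh' : Fin n → 𝒳h),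
      (((∀ i ∈ (univ : Finset (Fin n)), x' i = x i) ∧ ∀ i ∈ (univ : Finset (Fin n)), xh' i = xh i)) ↔ (x' = x ∧ xh' = xh) := by
    intro x' xh'; simp [funext_iff]
  simp_rw [h]
  simp [ite_and, Finset.sum_ite_eq']

lemma aux_margin_empty_empty {n : ℕ} (J : (Fin n → 𝒳) → (Fin n → 𝒳h) → ℝ)
    (x : Fin n → 𝒳) (xh : Fin n → 𝒳h) :
    margin J ∅ ∅ x xh = ∑ x' : Fin n → 𝒳, ∑ xh' : Fin n → 𝒳h, J x' xh' := by
  simp [margin]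

lemma aux_restrict_eq_iff {α : Type} {n m : ℕ} (h : ∀ j : Fin m, (j:ℕ) < n) {a b : Fin n → α} :
    ((fun j : Fin m => a ⟨(j:ℕ), h j⟩) = fun j : Fin m => b ⟨(j:ℕ), h j⟩) ↔
      ∀ i : Fin n, (i:ℕ) < m → a i = b i := by
  rw [funext_iff]
  constructor
  · intro H i hi
    have := H ⟨(i:ℕ), hi⟩
    simpa using this
  · intro H j
    exact H ⟨(j:ℕ), h j⟩ j.isLt

lemma aux_sum_shift (f : ℕ → ℝ) (m : ℕ) (N : ℕ) :
    ∑ t ∈ range N, (f (t + m) - f t) = ∑ t ∈ range m, (f (N + t) - f t) := by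
  induction N with
  | zero => simp
  | succ n ih =>
    rw [Finset.sum_range_succ, ih]
    have h1 : ∑ t ∈ range (m+1), f (n + t) = ∑ t ∈ range m, f (n + (t+1)) + f (n+0) :=
      Finset.sum_range_succ' (fun t => f (n + t)) m
    have h2 : ∑ t ∈ range (m+1), f (n + t) = ∑ t ∈ range m, f (n + t) + f (n + m) :=
      Finset.sum_range_succ _ m
    have h4 : ∑ t ∈ range m, f (n + 1 + t) = ∑ t ∈ range m, f (n + (t+1)) := by
      apply Finset.sum_congr rfl; intro x _; congr 1; omega
    simp only [Finset.sum_sub_distrib] at *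
    rw [h4]
    simp only [Nat.add_zero] at h1
    linarith [h1, h2]

lemma aux_key_sum (fF fE fB : ℕ → ℝ) (N k : ℕ) (hk : 1 ≤ k) (L : ℝ)
    (hFE : ∀ t, fF (N + t) = fE (N + t))
    (hEF : ∀ t, t < k - 1 → fE t = fF (t + 1))
    (hF0 : fF 0 = 0) (hB0 : fB 0 = 0)
    (hFtop : fF (N + (k - 1)) = L) :
    ∑ t ∈ range N, (fF (t + k) + fB t - fE (t + (k - 1)) - fB (t + 1))
      = L - ∑ t ∈ range N, (fE t - fF t) - fB N := by
  obtain ⟨k', rfl⟩ : ∃ k', k = k' + 1 := ⟨k - 1, by omega⟩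
  simp only [Nat.add_sub_cancel] at *
  have hmain : ∑ t ∈ range N, (fF (t + (k' + 1)) + fB t - fE (t + k') - fB (t + 1))
      = (∑ t ∈ range N, (fF (t + (k' + 1)) - fF t)) - (∑ t ∈ range N, (fE (t + k') - fE t))
        - (∑ t ∈ range N, (fB (t + 1) - fB t)) - (∑ t ∈ range N, (fE t - fF t)) := by
    rw [← Finset.sum_sub_distrib, ← Finset.sum_sub_distrib, ← Finset.sum_sub_distrib]
    apply Finset.sum_congr rfl; intros; ring
  have hS1 : ∑ t ∈ range N, (fF (t + (k' + 1)) - fF t)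
      = ∑ t ∈ range (k' + 1), (fF (N + t) - fF t) := aux_sum_shift fF (k' + 1) N
  have hS2 : ∑ t ∈ range N, (fE (t + k') - fE t)
      = ∑ t ∈ range k', (fE (N + t) - fE t) := aux_sum_shift fE k' N
  have hS3 : ∑ t ∈ range N, (fB (t + 1) - fB t) = fB N - fB 0 :=
    Finset.sum_range_sub fB N
  have hS1' : ∑ t ∈ range (k' + 1), (fF (N + t) - fF t)
      = ∑ t ∈ range k', (fF (N + t) - fF t) + (fF (N + k') - fF k') :=
    Finset.sum_range_succ _ k'
  have hc : ∑ t ∈ range k', (fF (N + t) - fF t) - ∑ t ∈ range k', (fE (N + t) - fE t)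
      = ∑ t ∈ range k', (fE t - fF t) := by
    rw [← Finset.sum_sub_distrib]
    apply Finset.sum_congr rfl; intro t _; rw [hFE t]; ring
  have hd : ∑ t ∈ range k', (fE t - fF t) = ∑ t ∈ range k', (fF (t + 1) - fF t) :=
    Finset.sum_congr rfl fun t ht => by
      rw [hEF t (by simp only [Finset.mem_range] at ht; omega)]
  have he : ∑ t ∈ range k', (fF (t + 1) - fF t) = fF k' - fF 0 :=
    Finset.sum_range_sub fF k'
  linarith [hmain, hS1, hS2, hS3, hS1', hc, hd, he]

lemma aux_logb_prod {s : Finset ℕ} (f : ℕ → ℝ) (hf : ∀ i ∈ s, f i ≠ 0) :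
    Real.logb 2 (∏ i ∈ s, f i) = ∑ i ∈ s, Real.logb 2 (f i) := by
  simp only [Real.logb, Real.log_prod hf, Finset.sum_div]

lemma aux_cmi_term_eq {N : ℕ} (J' : (Fin N → 𝒳) → (Fin N → 𝒳h) → ℝ) (k : ℕ) (hk : 1 ≤ k) (t : Fin N) :
    cmi (fun z : (Fin N → 𝒳) × (Fin N → 𝒳h) => J' z.1 z.2)
        (fun z => fun j : Fin (min ((t : ℕ) + k) N) =>
          z.2 ⟨(j : ℕ), lt_of_lt_of_le j.isLt (min_le_right _ _)⟩)
        (fun z => z.1 t)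
        (fun z => fun j : Fin (t : ℕ) =>
          z.1 ⟨(j : ℕ), by have h1 := j.isLt; have h2 := t.isLt; omega⟩) =
      ∑ z : (Fin N → 𝒳) × (Fin N → 𝒳h), J' z.1 z.2 * Real.logb 2
        ((margin J' (univ.filter fun j => (j:ℕ)+k ≤ (t:ℕ)+k) (univ.filter fun j => (j:ℕ) < (t:ℕ)+k) z.1 z.2 *
          margin J' (univ.filter fun j => (j:ℕ) < (t:ℕ)) ∅ z.1 z.2) /
         (margin J' (univ.filter fun j => (j:ℕ)+k ≤ (t:ℕ)+(k-1)) (univ.filter fun j => (j:ℕ) ≤ (t:ℕ)+(k-1)) z.1 z.2 *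
          margin J' (univ.filter fun j => (j:ℕ) < (t:ℕ)+1) ∅ z.1 z.2)) := by
  rw [cmi]
  apply Finset.sum_congr rfl
  intro z _
  congr 2
  rw [← aux_prEvent_eq_margin J' (univ.filter fun j => (j:ℕ)+k ≤ (t:ℕ)+k) (univ.filter fun j => (j:ℕ) < (t:ℕ)+k) z,
      ← aux_prEvent_eq_margin J' (univ.filter fun j => (j:ℕ) < (t:ℕ)) ∅ z,
      ← aux_prEvent_eq_margin J' (univ.filter fun j => (j:ℕ)+k ≤ (t:ℕ)+(k-1)) (univ.filter fun j => (j:ℕ) ≤ (t:ℕ)+(k-1)) z,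
      ← aux_prEvent_eq_margin J' (univ.filter fun j => (j:ℕ) < (t:ℕ)+1) ∅ z]
  congr 1
  · congr 1
    · -- P_fgh
      apply aux_prEvent_congr
      intro z'
      rw [aux_restrict_eq_iff (fun j : Fin (min ((t : ℕ) + k) N) => lt_of_lt_of_le j.isLt (min_le_right _ _)),
          aux_restrict_eq_iff (fun j : Fin (t:ℕ) => by have h1 := j.isLt; have h2 := t.isLt; omega)]
      simp only [mem_filter, mem_univ, true_and]
      constructor
      · rintro ⟨hf, hg, hh⟩
        constructor
        · intro i hi
          rcases Nat.lt_or_ge (i:ℕ) (t:ℕ) with h | h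
          · exact hh i h
          · have : i = t := Fin.ext (by omega)
            rw [this]; exact hg
        · intro i hi
          exact hf i (by have := i.isLt; omega)
      · rintro ⟨hx, hxh⟩
        exact ⟨fun i hi => hxh i (by have := i.isLt; omega), hx t (by omega), fun i hi => hx i (by omega)⟩
    · -- P_h
      apply aux_prEvent_congr
      intro z'
      rw [aux_restrict_eq_iff (fun j : Fin (t:ℕ) => by have h1 := j.isLt; have h2 := t.isLt; omega)]
      simp only [mem_filter, mem_univ, true_and, Finset.notMem_empty, false_implies, implies_true, and_true]
  · congr 1
    · -- P_fh
      apply aux_prEvent_congr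
      intro z'
      rw [aux_restrict_eq_iff (fun j : Fin (min ((t : ℕ) + k) N) => lt_of_lt_of_le j.isLt (min_le_right _ _)),
          aux_restrict_eq_iff (fun j : Fin (t:ℕ) => by have h1 := j.isLt; have h2 := t.isLt; omega)]
      simp only [mem_filter, mem_univ, true_and]
      constructor
      · rintro ⟨hf, hh⟩
        exact ⟨fun i hi => hh i (by omega), fun i hi => hf i (by have := i.isLt; omega)⟩
      · rintro ⟨hx, hxh⟩
        exact ⟨fun i hi => hxh i (by have := i.isLt; omega), fun i hi => hx i (by omega)⟩
    · -- P_gh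
      apply aux_prEvent_congr
      intro z'
      rw [aux_restrict_eq_iff (fun j : Fin (t:ℕ) => by have h1 := j.isLt; have h2 := t.isLt; omega)]
      simp only [mem_filter, mem_univ, true_and, Finset.notMem_empty, false_implies, implies_true, and_true]
      constructor
      · rintro ⟨hg, hh⟩
        intro i hi
        rcases Nat.lt_or_ge (i:ℕ) (t:ℕ) with h | h
        · exact hh i h
        · have : i = t := Fin.ext (by omega)
          rw [this]; exact hg
      · intro hx
        exact ⟨hx t (by omega), fun i hi => hx i (by omega)⟩

/-- **`k`-delay directed information as an expectation.**  For a jointly distributed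
process on finite alphabets and any `N ≥ 1`,
`I_k(X̂^N → X^N) = Σ_{n=1}^N I(X̂^{min(n+k-1,N)} ; X_n | X^{n-1})` equals the
expectation of `log [ P_{X^N,X̂^N} / ( vec P^k_{X̂^N|X^N} · P_{X^N} ) ]` under the
joint law (with the convention `0 log 0 = 0`). -/
theorem kdelay_directed_info_as_expectation
    (J : ∀ n : ℕ, (Fin n → 𝒳) → (Fin n → 𝒳h) → ℝ) (hJ : IsJointProcess J)
    (k : ℕ) (hk : 1 ≤ k) (N : ℕ) (hN : 1 ≤ N) :
    ∑ t : Fin N,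
        cmi (fun z : (Fin N → 𝒳) × (Fin N → 𝒳h) => J N z.1 z.2)
          -- `X̂^{min(n+k-1, N)}` for `n = t+1`
          (fun z => fun j : Fin (min ((t : ℕ) + k) N) =>
            z.2 ⟨(j : ℕ), lt_of_lt_of_le j.isLt (min_le_right _ _)⟩)
          -- `X_n`
          (fun z => z.1 t)
          -- `X^{n-1}`
          (fun z => fun j : Fin (t : ℕ) =>
            z.1 ⟨(j : ℕ), by have h1 := j.isLt; have h2 := t.isLt; omega⟩) =
      ∑ x : Fin N → 𝒳, ∑ xh : Fin N → 𝒳h,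
        J N x xh * Real.logb 2
          (J N x xh / (vecP (J N) k x xh * margin (J N) univ ∅ x xh)) := by
  obtain ⟨hJ0, hJ1, -⟩ := hJ
  have step1 : ∑ t : Fin N,
        cmi (fun z : (Fin N → 𝒳) × (Fin N → 𝒳h) => J N z.1 z.2)
          (fun z => fun j : Fin (min ((t : ℕ) + k) N) =>
            z.2 ⟨(j : ℕ), lt_of_lt_of_le j.isLt (min_le_right _ _)⟩)
          (fun z => z.1 t)
          (fun z => fun j : Fin (t : ℕ) =>
            z.1 ⟨(j : ℕ), by have h1 := j.isLt; have h2 := t.isLt; omega⟩)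
      = ∑ s ∈ range N, ∑ z : (Fin N → 𝒳) × (Fin N → 𝒳h), J N z.1 z.2 * Real.logb 2
        ((margin (J N) (univ.filter fun j => (j:ℕ)+k ≤ s+k) (univ.filter fun j => (j:ℕ) < s+k) z.1 z.2 *
          margin (J N) (univ.filter fun j => (j:ℕ) < s) ∅ z.1 z.2) /
         (margin (J N) (univ.filter fun j => (j:ℕ)+k ≤ s+(k-1)) (univ.filter fun j => (j:ℕ) ≤ s+(k-1)) z.1 z.2 *
          margin (J N) (univ.filter fun j => (j:ℕ) < s+1) ∅ z.1 z.2)) := by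
    rw [← Fin.sum_univ_eq_sum_range (fun s : ℕ => ∑ z : (Fin N → 𝒳) × (Fin N → 𝒳h), J N z.1 z.2 * Real.logb 2
        ((margin (J N) (univ.filter fun j => (j:ℕ)+k ≤ s+k) (univ.filter fun j => (j:ℕ) < s+k) z.1 z.2 *
          margin (J N) (univ.filter fun j => (j:ℕ) < s) ∅ z.1 z.2) /
         (margin (J N) (univ.filter fun j => (j:ℕ)+k ≤ s+(k-1)) (univ.filter fun j => (j:ℕ) ≤ s+(k-1)) z.1 z.2 *
          margin (J N) (univ.filter fun j => (j:ℕ) < s+1) ∅ z.1 z.2))) N]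
    exact Finset.sum_congr rfl fun t _ => aux_cmi_term_eq (J N) k hk t
  rw [step1, Finset.sum_comm, Fintype.sum_prod_type]
  apply Finset.sum_congr rfl
  intro x1 _
  apply Finset.sum_congr rfl
  intro x2 _
  dsimp only
  set z : (Fin N → 𝒳) × (Fin N → 𝒳h) := (x1, x2) with hzdef
  rcases eq_or_lt_of_le (hJ0 N z.1 z.2) with hz | hz
  · rw [← hz]; simp
  · rw [← Finset.mul_sum]
    congr 1
    have hmpos : ∀ S T : Finset (Fin N), 0 < margin (J N) S T z.1 z.2 :=
      fun S T => lt_of_lt_of_le hz (aux_le_margin (J N) (hJ0 N) S T z.1 z.2)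
    have hL : ∀ s ∈ range N,
        Real.logb 2
        ((margin (J N) (univ.filter fun j => (j:ℕ)+k ≤ s+k) (univ.filter fun j => (j:ℕ) < s+k) z.1 z.2 *
          margin (J N) (univ.filter fun j => (j:ℕ) < s) ∅ z.1 z.2) /
         (margin (J N) (univ.filter fun j => (j:ℕ)+k ≤ s+(k-1)) (univ.filter fun j => (j:ℕ) ≤ s+(k-1)) z.1 z.2 *
          margin (J N) (univ.filter fun j => (j:ℕ) < s+1) ∅ z.1 z.2))
        = (Real.logb 2 (margin (J N) (univ.filter fun j => (j:ℕ)+k ≤ s+k) (univ.filter fun j => (j:ℕ) < s+k) z.1 z.2)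
          + Real.logb 2 (margin (J N) (univ.filter fun j => (j:ℕ) < s) ∅ z.1 z.2)
          - Real.logb 2 (margin (J N) (univ.filter fun j => (j:ℕ)+k ≤ s+(k-1)) (univ.filter fun j => (j:ℕ) ≤ s+(k-1)) z.1 z.2)
          - Real.logb 2 (margin (J N) (univ.filter fun j => (j:ℕ) < s+1) ∅ z.1 z.2)) := by
      intro s _
      rw [Real.logb_div (mul_pos (hmpos _ _) (hmpos _ _)).ne' (mul_pos (hmpos _ _) (hmpos _ _)).ne',
          Real.logb_mul (hmpos _ _).ne' (hmpos _ _).ne',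
          Real.logb_mul (hmpos _ _).ne' (hmpos _ _).ne']
      ring
    rw [Finset.sum_congr rfl hL]
    have hvec_pos : 0 < vecP (J N) k z.1 z.2 := by
      rw [vecP]
      exact Finset.prod_pos fun t _ => div_pos (hmpos _ _) (hmpos _ _)
    have hBN_pos : 0 < margin (J N) univ ∅ z.1 z.2 := hmpos _ _
    rw [Real.logb_div hz.ne' (mul_pos hvec_pos hBN_pos).ne',
        Real.logb_mul hvec_pos.ne' hBN_pos.ne']
    have hlogvec : Real.logb 2 (vecP (J N) k z.1 z.2)
        = ∑ t ∈ range N,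
          (Real.logb 2 (margin (J N) (univ.filter fun j => (j:ℕ)+k ≤ t) (univ.filter fun j => (j:ℕ) ≤ t) z.1 z.2)
            - Real.logb 2 (margin (J N) (univ.filter fun j => (j:ℕ)+k ≤ t) (univ.filter fun j => (j:ℕ) < t) z.1 z.2)) := by
      rw [vecP, aux_logb_prod _ (fun t _ => (div_pos (hmpos _ _) (hmpos _ _)).ne')]
      exact Finset.sum_congr rfl fun t _ => Real.logb_div (hmpos _ _).ne' (hmpos _ _).ne'
    rw [hlogvec]
    have huniv : margin (J N) univ ∅ z.1 z.2
        = margin (J N) (univ.filter fun j : Fin N => (j:ℕ) < N) ∅ z.1 z.2 := by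
      congr 1
      ext j
      simp [j.isLt]
    rw [huniv, sub_add_eq_sub_sub]
    -- now apply the key combinatorial identity
    apply aux_key_sum
      (fun s => Real.logb 2 (margin (J N) (univ.filter fun j => (j:ℕ)+k ≤ s) (univ.filter fun j => (j:ℕ) < s) z.1 z.2))
      (fun s => Real.logb 2 (margin (J N) (univ.filter fun j => (j:ℕ)+k ≤ s) (univ.filter fun j => (j:ℕ) ≤ s) z.1 z.2))
      (fun s => Real.logb 2 (margin (J N) (univ.filter fun j => (j:ℕ) < s) ∅ z.1 z.2))
      N k hk _
    · -- hFE
      intro t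
      have h1 : (univ.filter fun j : Fin N => (j:ℕ) < N + t) = univ.filter fun j : Fin N => (j:ℕ) ≤ N + t := by
        ext j
        have hj := j.isLt
        simp only [mem_filter, mem_univ, true_and]
        omega
      rw [h1]
    · -- hEF
      intro t ht
      have h1 : (univ.filter fun j : Fin N => (j:ℕ) + k ≤ t) = univ.filter fun j : Fin N => (j:ℕ) + k ≤ t + 1 := by
        ext j
        simp only [mem_filter, mem_univ, true_and]
        omega
      have h2 : (univ.filter fun j : Fin N => (j:ℕ) ≤ t) = univ.filter fun j : Fin N => (j:ℕ) < t + 1 := by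
        ext j
        simp only [mem_filter, mem_univ, true_and]
        omega
      rw [h1, h2]
    · -- hF0
      have h1 : (univ.filter fun j : Fin N => (j:ℕ) + k ≤ 0) = (∅ : Finset (Fin N)) := by
        ext j
        simp only [mem_filter, mem_univ, true_and, Finset.notMem_empty, iff_false]
        omega
      have h2 : (univ.filter fun j : Fin N => (j:ℕ) < 0) = (∅ : Finset (Fin N)) := by
        ext j
        simp only [mem_filter, mem_univ, true_and, Finset.notMem_empty, iff_false]
        omega
      rw [h1, h2, aux_margin_empty_empty, hJ1 N, Real.logb_one]
    · -- hB0
      have h2 : (univ.filter fun j : Fin N => (j:ℕ) < 0) = (∅ : Finset (Fin N)) := by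
        ext j
        simp only [mem_filter, mem_univ, true_and, Finset.notMem_empty, iff_false]
        omega
      rw [h2, aux_margin_empty_empty, hJ1 N, Real.logb_one]
    · -- hFtop
      have h1 : (univ.filter fun j : Fin N => (j:ℕ) + k ≤ N + (k - 1)) = (univ : Finset (Fin N)) := by
        ext j
        have hj := j.isLt
        simp only [mem_filter, mem_univ, true_and, iff_true]
        omega
      have h2 : (univ.filter fun j : Fin N => (j:ℕ) < N + (k - 1)) = (univ : Finset (Fin N)) := by
        ext j
        have hj := j.isLt
        simp only [mem_filter, mem_univ, true_and, iff_true]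
        omega
      rw [h1, h2, aux_margin_univ_univ]

end
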